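/- The space of symmetric 2×2 real matrices with the positive semidefinite (Loewner) order is not a lattice: there exist symmetric matrices A and B having no least upper bound with respect to this order. -/

import Mathlib

open Matrix

lemma psd2 (a b d : ℝ) (ha : 0 ≤ a) (hd : 0 ≤ d) (h : b * b ≤ a * d) :
    (!![a, b; b, d] : Matrix (Fin 2) (Fin 2) ℝ).PosSemidef := by
  refine Matrix.PosSemidef.of_dotProduct_mulVec_nonneg ?_ ?_
  · ext i j; fin_cases i <;> fin_cases j <;> simp [Matrix.conjTranspose_apply]
  · intro x
    have hq : dotProduct (star x) ((!![a, b; b, d] : Matrix (Fin 2) (Fin 2) ℝ) *ᵥ x)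
        = a * x 0 * x 0 + b * x 0 * x 1 + b * x 1 * x 0 + d * x 1 * x 1 := by
      simp [dotProduct, Matrix.mulVec, Fin.sum_univ_two]
      ring
    rw [hq]
    rcases eq_or_lt_of_le ha with h0 | hpos
    · have hb : b = 0 := by nlinarith
      rw [← h0, hb]
      nlinarith [sq_nonneg (x 1)]
    · nlinarith [sq_nonneg (a * x 0 + b * x 1), sq_nonneg (x 1), mul_pos hpos hpos,
        mul_nonneg (mul_nonneg hpos.le ha) hd]

lemma psd2_det {M : Matrix (Fin 2) (Fin 2) ℝ} (h : M.PosSemidef) (hs : M 1 0 = M 0 1) :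
    M 0 1 * M 0 1 ≤ M 0 0 * M 1 1 := by
  set a := M 0 0; set b := M 0 1; set d := M 1 1
  have key : ∀ v : Fin 2 → ℝ,
      0 ≤ a * v 0 * v 0 + b * v 0 * v 1 + b * v 1 * v 0 + d * v 1 * v 1 := by
    intro v
    have := h.dotProduct_mulVec_nonneg v
    have hq : dotProduct (star v) (Matrix.mulVec M v)
        = a * v 0 * v 0 + b * v 0 * v 1 + b * v 1 * v 0 + d * v 1 * v 1 := by
      simp [dotProduct, Matrix.mulVec, Fin.sum_univ_two, hs]
      ring
    rw [hq] at this; exact this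
  have h1 := key ![b, -a]
  have h2 := key ![d, -b]
  have h3 := key ![1, 1]
  have h4 := key ![1, -1]
  have ha := key ![1, 0]
  have hdd := key ![0, 1]
  simp [Matrix.cons_val_zero, Matrix.cons_val_one] at h1 h2 h3 h4 ha hdd
  rcases eq_or_lt_of_le (by nlinarith : (0:ℝ) ≤ a + d) with hz | hp
  · have ha0 : a = 0 := by nlinarith
    have hd0 : d = 0 := by nlinarith
    have hb0 : b = 0 := by nlinarith
    simp [ha0, hd0, hb0]
  · nlinarith

theorem stmt_9 :
    ∃ A B : Matrix (Fin 2) (Fin 2) ℝ, A.IsSymm ∧ B.IsSymm ∧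
      ¬ ∃ C : Matrix (Fin 2) (Fin 2) ℝ, C.IsSymm ∧
        (C - A).PosSemidef ∧ (C - B).PosSemidef ∧
        (∀ D : Matrix (Fin 2) (Fin 2) ℝ, D.IsSymm →
          (D - A).PosSemidef → (D - B).PosSemidef → (D - C).PosSemidef) := by
  refine ⟨!![1, 0; 0, 0], !![0, 0; 0, 1], ?_, ?_, ?_⟩
  · ext i j; fin_cases i <;> fin_cases j <;> simp [Matrix.IsSymm]
  · ext i j; fin_cases i <;> fin_cases j <;> simp [Matrix.IsSymm]
  rintro ⟨C, hCs, hCA, hCB, hmin⟩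
  have hIA : ((1 : Matrix (Fin 2) (Fin 2) ℝ) - !![1, 0; 0, 0]).PosSemidef := by
    have h1 : (1 : Matrix (Fin 2) (Fin 2) ℝ) - !![1, 0; 0, 0] = !![0, 0; 0, 1] := by
      ext i j; fin_cases i <;> fin_cases j <;> simp [Matrix.one_apply]
    rw [h1]; exact psd2 0 0 1 le_rfl zero_le_one (by norm_num)
  have hIB : ((1 : Matrix (Fin 2) (Fin 2) ℝ) - !![0, 0; 0, 1]).PosSemidef := by
    have h1 : (1 : Matrix (Fin 2) (Fin 2) ℝ) - !![0, 0; 0, 1] = !![1, 0; 0, 0] := by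
      ext i j; fin_cases i <;> fin_cases j <;> simp [Matrix.one_apply]
    rw [h1]; exact psd2 1 0 0 zero_le_one le_rfl (by norm_num)
  have hIC := hmin 1 Matrix.isSymm_one hIA hIB
  have hsym : C 1 0 = C 0 1 := by
    have h1 := congrFun (congrFun hCs 1) 0
    simpa [Matrix.transpose_apply] using h1.symm
  have hCA0 : 0 ≤ C 0 0 - 1 := by
    have := hCA.dotProduct_mulVec_nonneg ![1, 0]
    simpa [dotProduct, Matrix.mulVec, Fin.sum_univ_two, Matrix.sub_apply] using this
  have hCB1 : 0 ≤ C 1 1 - 1 := by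
    have := hCB.dotProduct_mulVec_nonneg ![0, 1]
    simpa [dotProduct, Matrix.mulVec, Fin.sum_univ_two, Matrix.sub_apply] using this
  have hIC0 : 0 ≤ 1 - C 0 0 := by
    have := hIC.dotProduct_mulVec_nonneg ![1, 0]
    simpa [dotProduct, Matrix.mulVec, Fin.sum_univ_two, Matrix.sub_apply,
      Matrix.one_apply] using this
  have hIC1 : 0 ≤ 1 - C 1 1 := by
    have := hIC.dotProduct_mulVec_nonneg ![0, 1]
    simpa [dotProduct, Matrix.mulVec, Fin.sum_univ_two, Matrix.sub_apply,
      Matrix.one_apply] using this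
  have hc00 : C 0 0 = 1 := le_antisymm (by linarith) (by linarith)
  have hc11 : C 1 1 = 1 := le_antisymm (by linarith) (by linarith)
  have hdCA := psd2_det hCA (by simp [Matrix.sub_apply, hsym])
  simp [Matrix.sub_apply, hc00, hc11] at hdCA
  have hb : C 0 1 = 0 := by nlinarith
  have hEA : ((!![2, 6/5; 6/5, 2] : Matrix (Fin 2) (Fin 2) ℝ) - !![1, 0; 0, 0]).PosSemidef := by
    have h1 : (!![2, 6/5; 6/5, 2] : Matrix (Fin 2) (Fin 2) ℝ) - !![1, 0; 0, 0]
        = !![1, 6/5; 6/5, 2] := by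
      ext i j; fin_cases i <;> fin_cases j <;> norm_num
    rw [h1]; exact psd2 1 (6/5) 2 zero_le_one (by norm_num) (by norm_num)
  have hEB : ((!![2, 6/5; 6/5, 2] : Matrix (Fin 2) (Fin 2) ℝ) - !![0, 0; 0, 1]).PosSemidef := by
    have h1 : (!![2, 6/5; 6/5, 2] : Matrix (Fin 2) (Fin 2) ℝ) - !![0, 0; 0, 1]
        = !![2, 6/5; 6/5, 1] := by
      ext i j; fin_cases i <;> fin_cases j <;> norm_num
    rw [h1]; exact psd2 2 (6/5) 1 (by norm_num) zero_le_one (by norm_num)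
  have hEs : (!![2, 6/5; 6/5, 2] : Matrix (Fin 2) (Fin 2) ℝ).IsSymm := by
    ext i j; fin_cases i <;> fin_cases j <;> simp [Matrix.IsSymm]
  have hEC := hmin _ hEs hEA hEB
  have hdet := psd2_det hEC (by simp [Matrix.sub_apply, hsym, hb])
  simp [Matrix.sub_apply, hc00, hc11, hb] at hdet
  norm_num at hdet
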